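/- Let θ < λ be regular with λ ∈ (θ, θ^{+ω}) or λ θ-inaccessible, and let D be a transitive θ-covering matrix on λ such that S(D) holds. Then CP(D) holds witnessed by a set A such that moreover [A]^{μ} is covered by D for every cardinal μ < λ (not just μ = θ). -/

import Mathlib

open Cardinal Set

/-- `C` is a club (closed and unbounded) subset of the ordinal `lam`. -/
def IsClubIn (C : Set Ordinal.{0}) (lam : Ordinal.{0}) : Prop :=
  (∀ γ ∈ C, γ < lam) ∧ (∀ α < lam, ∃ β ∈ C, α < β) ∧
    (∀ δ, δ < lam → δ ≠ 0 → (∀ α < δ, ∃ β ∈ C, α < β ∧ β < δ) → δ ∈ C)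

/-- `S` is a stationary subset of the ordinal `lam`. -/
def IsStationaryIn (S : Set Ordinal.{0}) (lam : Ordinal.{0}) : Prop :=
  (∀ γ ∈ S, γ < lam) ∧ ∀ C, IsClubIn C lam → (S ∩ C).Nonempty
/-- `D` is a `θ`-covering matrix on `lam` (`θ`, `lam` ordinals, typically `θ = θc.ord`
for a regular cardinal `θc`): entries `D i β` for `i < θ`, `β < lam` union up to `β`,
are monotone in `i`, and are directed under end-coverage. -/
def IsCovMatrix (θ lam : Ordinal.{0}) (D : Ordinal.{0} → Ordinal.{0} → Set Ordinal.{0}) : Prop :=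
  (∀ β < lam, (⋃ i ∈ Set.Iio θ, D i β) = Set.Iio β) ∧
  (∀ i j, i ≤ j → j < θ → ∀ β < lam, D i β ⊆ D j β) ∧
  (∀ β γ, β < γ → γ < lam → ∀ i < θ, ∃ j < θ, D i β ⊆ D j γ)

/-- `D` is uniform: each `D i β` contains a club in `β` for eventually all `i < θ`. -/
def IsUniformMatrix (θ lam : Ordinal.{0}) (D : Ordinal.{0} → Ordinal.{0} → Set Ordinal.{0}) : Prop :=
  ∀ β < lam, ∃ i₀ < θ, ∀ i, i₀ ≤ i → i < θ → ∃ C, IsClubIn C β ∧ C ⊆ D i β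

/-- `D` is transitive: `α ∈ D i β` implies `D i α ⊆ D i β`. -/
def IsTransMatrix (θ lam : Ordinal.{0}) (D : Ordinal.{0} → Ordinal.{0} → Set Ordinal.{0}) : Prop :=
  ∀ i < θ, ∀ β < lam, ∀ α ∈ D i β, D i α ⊆ D i β

/-- `D` is closed: each entry is closed under suprema of its subsets of size `≤ θ`. -/
def IsClosedMatrix (θ : Cardinal.{0}) (lam : Ordinal.{0})
    (D : Ordinal.{0} → Ordinal.{0} → Set Ordinal.{0}) : Prop :=
  ∀ i < θ.ord, ∀ β < lam, ∀ X ⊆ D i β, X.Nonempty → #X ≤ Cardinal.lift.{1} θ →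
    sSup X ∈ D i β

/-- `S(D)`: there is a stationary `S ⊆ lam` such that every `θ`-indexed family of
stationary subsets of `S` meets a single entry of the matrix `D`. -/
def MatrixS (θ : Cardinal.{0}) (lam : Ordinal.{0})
    (D : Ordinal.{0} → Ordinal.{0} → Set Ordinal.{0}) : Prop :=
  ∃ S, IsStationaryIn S lam ∧ ∀ Ss : Ordinal.{0} → Set Ordinal.{0},
    (∀ i < θ.ord, Ss i ⊆ S ∧ IsStationaryIn (Ss i) lam) →
    ∃ j < θ.ord, ∃ β < lam, ∀ i < θ.ord, (Ss i ∩ D j β).Nonempty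

/-- `CP(D)`: there is an unbounded `A ⊆ lam` such that every subset of `A` of size `θ`
is contained in a single entry of `D`. -/
def MatrixCP (θ : Cardinal.{0}) (lam : Ordinal.{0})
    (D : Ordinal.{0} → Ordinal.{0} → Set Ordinal.{0}) : Prop :=
  ∃ A : Set Ordinal.{0}, A ⊆ Set.Iio lam ∧ (∀ α < lam, ∃ β ∈ A, α < β) ∧
    ∀ Z ⊆ A, #Z = Cardinal.lift.{1} θ → ∃ i < θ.ord, ∃ β < lam, Z ⊆ D i β

lemma bdd_of_mk_lt {c : Cardinal.{0}} (hc : c.IsRegular) {Z : Set Ordinal.{0}}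
    (hZ : ∀ z ∈ Z, z < c.ord) (hcard : #Z < Cardinal.lift.{1} c) :
    ∃ b < c.ord, ∀ z ∈ Z, z < b := by
  set f : Z → Ordinal.{1} := fun z => Ordinal.lift.{1,0} z.1 with hf
  have h1 : iSup f < Ordinal.lift.{1,0} c.ord := by
    apply Ordinal.iSup_lt_ord_lift.{1,1}
    · rw [← Ordinal.lift_cof, hc.cof_eq]
      simpa using hcard
    · intro z
      exact Ordinal.lift_lt.mpr (hZ z z.2)
  obtain ⟨b, hb, hbe⟩ := Ordinal.lt_lift_iff.mp h1
  refine ⟨b + 1, (Cardinal.isSuccLimit_ord hc.aleph0_le).succ_lt hb, ?_⟩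
  intro z hz
  have h2 : f ⟨z, hz⟩ ≤ iSup f := le_ciSup (Ordinal.bddAbove_range.{1,1} f) _
  rw [← hbe] at h2
  exact lt_of_le_of_lt (Ordinal.lift_le.mp h2) (lt_add_one b)

lemma isClubIn_iInter {lamc : Cardinal.{0}} (hlam : lamc.IsRegular) (hunc : ℵ₀ < lamc)
    {ι : Type 1} [Nonempty ι] (Cs : ι → Set Ordinal.{0})
    (hC : ∀ i, IsClubIn (Cs i) lamc.ord) (hcard : #ι < Cardinal.lift.{1} lamc) :
    IsClubIn (⋂ i, Cs i) lamc.ord := by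
  have hlim : Order.IsSuccLimit (lamc.ord) := Cardinal.isSuccLimit_ord hlam.aleph0_le
  have claim : ∀ x < lamc.ord, ∃ y, y < lamc.ord ∧ x < y ∧
      ∀ i, ∃ c ∈ Cs i, x < c ∧ c < y := by
    intro x hx
    choose e he hxe using fun i => (hC i).2.1 x hx
    obtain ⟨b, hb, hbb⟩ := bdd_of_mk_lt hlam (Z := Set.range e)
      (fun z hz => by obtain ⟨i, rfl⟩ := hz; exact (hC i).1 _ (he i))
      (mk_range_le.trans_lt hcard)
    refine ⟨max b (x+1), max_lt hb (hlim.succ_lt hx),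
      lt_of_lt_of_le (lt_add_one x) (le_max_right _ _), ?_⟩
    intro i
    exact ⟨e i, he i, hxe i, lt_of_lt_of_le (hbb _ (mem_range_self i)) (le_max_left _ _)⟩
  classical
  set nxt : Ordinal.{0} → Ordinal.{0} :=
    fun x => if hx : x < lamc.ord then (claim x hx).choose else 0 with hnxt
  have nxt_spec : ∀ x (hx : x < lamc.ord), nxt x < lamc.ord ∧ x < nxt x ∧
      ∀ i, ∃ c ∈ Cs i, x < c ∧ c < nxt x := by
    intro x hx
    simp only [hnxt, dif_pos hx]
    exact (claim x hx).choose_spec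
  constructor
  · intro γ hγ
    have := mem_iInter.mp hγ (Classical.arbitrary ι)
    exact (hC _).1 _ this
  constructor
  · intro α hα
    set s : ℕ → Ordinal.{0} := fun n => nxt^[n] (α + 1) with hs
    have hmono : ∀ n, s n < lamc.ord ∧ s n < s (n+1) := by
      intro n
      induction n with
      | zero =>
        have h0 : s 0 = α + 1 := rfl
        have h0lt : s 0 < lamc.ord := by rw [h0]; exact hlim.succ_lt hα
        refine ⟨h0lt, ?_⟩
        have : s 1 = nxt (s 0) := by
          simp [hs, Function.iterate_succ_apply']
        rw [this]
        exact (nxt_spec _ h0lt).2.1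
      | succ n ih =>
        have hlt : s (n+1) < lamc.ord := by
          have : s (n+1) = nxt (s n) := by simp [hs, Function.iterate_succ_apply']
          rw [this]
          exact (nxt_spec _ ih.1).1
        refine ⟨hlt, ?_⟩
        have : s (n+2) = nxt (s (n+1)) := by simp [hs, Function.iterate_succ_apply']
        rw [this]
        exact (nxt_spec _ hlt).2.1
    have hcnt : #(Set.range s) < Cardinal.lift.{1} lamc := by
      have h := Cardinal.mk_range_le_lift (f := s)
      simp only [Cardinal.lift_id', Cardinal.mk_nat, Cardinal.lift_aleph0] at h
      calc #(Set.range s) ≤ ℵ₀ := by simpa using h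
        _ < Cardinal.lift.{1} lamc := by
            rw [← Cardinal.lift_aleph0.{1,0}]
            exact Cardinal.lift_lt.mpr hunc
    obtain ⟨b, hb, hbb⟩ := bdd_of_mk_lt hlam (Z := Set.range s)
      (fun z hz => by obtain ⟨n, rfl⟩ := hz; exact (hmono n).1) hcnt
    have hbdd : BddAbove (Set.range s) := ⟨b, fun z hz => (hbb z hz).le⟩
    set δ : Ordinal.{0} := ⨆ n, s n with hδ
    have hδlt : δ < lamc.ord := lt_of_le_of_lt (ciSup_le fun n => (hbb _ (mem_range_self n)).le) hb
    have hsle : ∀ n, s n ≤ δ := fun n => le_ciSup hbdd n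
    have hαδ : α < δ := lt_of_lt_of_le (lt_add_one α) (hsle 0)
    refine ⟨δ, ?_, hαδ⟩
    apply mem_iInter.mpr
    intro i
    apply (hC i).2.2 δ hδlt (ne_of_gt (lt_of_le_of_lt (zero_le : (0:Ordinal) ≤ α) hαδ))
    intro α' hα'
    obtain ⟨n, hn⟩ : ∃ n, α' < s n := by
      by_contra hno
      push_neg at hno
      exact absurd (ciSup_le hno) (not_le.mpr hα')
    obtain ⟨c, hc, hsc, hcn⟩ := (nxt_spec (s n) (hmono n).1).2.2 i
    refine ⟨c, hc, lt_trans hn hsc, ?_⟩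
    have : s (n+1) = nxt (s n) := by simp [hs, Function.iterate_succ_apply']
    exact lt_of_lt_of_le (this ▸ hcn) (hsle (n+1))
  · intro δ hδ hδ0 hlimpt
    apply mem_iInter.mpr
    intro i
    apply (hC i).2.2 δ hδ hδ0
    intro α hα
    obtain ⟨β, hβ, hαβ, hβδ⟩ := hlimpt α hα
    exact ⟨β, mem_iInter.mp hβ i, hαβ, hβδ⟩

lemma isClubIn_inter {lamc : Cardinal.{0}} (hlam : lamc.IsRegular) (hunc : ℵ₀ < lamc)
    {C₁ C₂ : Set Ordinal.{0}} (h1 : IsClubIn C₁ lamc.ord) (h2 : IsClubIn C₂ lamc.ord) :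
    IsClubIn (C₁ ∩ C₂) lamc.ord := by
  have key := isClubIn_iInter hlam hunc (ι := ULift.{1} Bool)
    (fun b => if b.down then C₁ else C₂)
    (fun b => by rcases b with ⟨b⟩; cases b <;> simpa)
    (lt_of_lt_of_le (Cardinal.lt_aleph0_of_finite _)
      (by rw [← Cardinal.lift_aleph0.{1,0}]; exact Cardinal.lift_le.mpr hunc.le))
  have heq : (⋂ b : ULift.{1} Bool, if b.down then C₁ else C₂) = C₁ ∩ C₂ := by
    ext x
    simp only [mem_iInter, mem_inter_iff]
    constructor
    · intro h
      have h1' := h ⟨true⟩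
      have h2' := h ⟨false⟩
      simp at h1' h2'
      exact ⟨h1', h2'⟩
    · rintro ⟨hx1, hx2⟩ ⟨b⟩
      cases b <;> simpa
  rwa [heq] at key

lemma isClubIn_tail {lamo : Ordinal.{0}} (hlim : Order.IsSuccLimit lamo) {ξ : Ordinal.{0}} (hξ : ξ < lamo) :
    IsClubIn (Set.Ioi ξ ∩ Set.Iio lamo) lamo := by
  refine ⟨fun γ hγ => hγ.2, ?_, ?_⟩
  · intro α hα
    refine ⟨max α ξ + 1, ⟨lt_of_le_of_lt (le_max_right α ξ) (lt_add_one (max α ξ)), hlim.succ_lt (max_lt hα hξ)⟩, lt_of_le_of_lt (le_max_left α ξ) (lt_add_one (max α ξ))⟩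
  · intro δ hδl hδ0 hlimpt
    obtain ⟨β, hβ, _, hβδ⟩ := hlimpt 0 (pos_iff_ne_zero.mpr hδ0)
    exact ⟨lt_trans hβ.1 hβδ, hδl⟩

lemma regular_of_between {θ lam : Cardinal.{0}} (hθ : θ.IsRegular) {n : ℕ}
    (hlam : lam = (Order.succ)^[n] θ) {μ : Cardinal.{0}} (hθμ : θ < μ) (hμlam : μ < lam) :
    μ.IsRegular := by
  have aux : ∀ m : ℕ, ∀ ν : Cardinal.{0}, θ ≤ ν → ν < (Order.succ)^[m] θ →
      ∃ k, k < m ∧ ν = (Order.succ)^[k] θ := by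
    intro m
    induction m with
    | zero => intro ν h1 h2; exact absurd h2 (not_lt.mpr h1)
    | succ m ih =>
      intro ν h1 h2
      rw [Function.iterate_succ_apply'] at h2
      have h3 : ν ≤ (Order.succ)^[m] θ := Order.lt_succ_iff.mp h2
      rcases eq_or_lt_of_le h3 with heq | hlt
      · exact ⟨m, Nat.lt_succ_self m, heq⟩
      · obtain ⟨k, hk, he⟩ := ih ν h1 hlt
        exact ⟨k, hk.trans (Nat.lt_succ_self m), he⟩
  obtain ⟨k, hk, he⟩ := aux n μ hθμ.le (hlam ▸ hμlam)
  rcases k with _ | k'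
  · simp at he; exact absurd he.symm (ne_of_lt hθμ)
  · rw [Function.iterate_succ_apply'] at he
    rw [he]
    exact Cardinal.isRegular_succ (hθ.aleph0_le.trans (Order.le_succ_iterate k' θ))

lemma exists_superset_card_eq {Z W : Set Ordinal.{0}} (hWZ : W ⊆ Z) {t : Cardinal.{1}}
    (hW : #W ≤ t) (ht : t ≤ #Z) (hinf : ℵ₀ ≤ t) :
    ∃ W', W ⊆ W' ∧ W' ⊆ Z ∧ #W' = t := by
  obtain ⟨V, hVZ, hV⟩ := Cardinal.le_mk_iff_exists_subset.mp ht
  refine ⟨W ∪ V, subset_union_left, union_subset hWZ hVZ, le_antisymm ?_ ?_⟩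
  · refine (Cardinal.mk_union_le _ _).trans ?_
    rw [hV]
    calc #W + t ≤ t + t := add_le_add_left hW t
      _ = t := Cardinal.add_eq_self hinf
  · rw [← hV]; exact Cardinal.mk_le_mk_of_subset subset_union_right

/-- If `lam` is regular and either `θ⁺ⁿ` (`1 ≤ n`) or `θ`-inaccessible, `D` is a transitive
`θ`-covering matrix on `lam`, and `S(D)` holds, then `CP(D)` holds, witnessed by an
unbounded `A` such that moreover `[A]^μ` is covered by `D` for every cardinal `μ < lam`. -/
theorem matrixCP_strong_of_matrixS (θ lam : Cardinal.{0})
    (hθ : θ.IsRegular) (hlam : lam.IsRegular) (hθlam : θ < lam)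
    (hcase : (∃ n : ℕ, 1 ≤ n ∧ lam = (Order.succ)^[n] θ) ∨ (∀ ζ < lam, ζ ^ θ < lam))
    (D : Ordinal.{0} → Ordinal.{0} → Set Ordinal.{0})
    (hmat : IsCovMatrix θ.ord lam.ord D)
    (htrans : IsTransMatrix θ.ord lam.ord D)
    (hS : MatrixS θ lam.ord D) :
    ∃ A : Set Ordinal.{0}, A ⊆ Set.Iio lam.ord ∧ (∀ α < lam.ord, ∃ β ∈ A, α < β) ∧
      ∀ μ : Cardinal.{0}, μ < lam →
        ∀ Z ⊆ A, #Z = Cardinal.lift.{1} μ → ∃ i < θ.ord, ∃ β < lam.ord, Z ⊆ D i β := by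
  classical
  obtain ⟨S, hSstat, hSprop⟩ := hS
  obtain ⟨hDun, hDmono, hDdir⟩ := hmat
  have hθω : ℵ₀ ≤ θ := hθ.aleph0_le
  have hlw : ℵ₀ < lam := lt_of_le_of_lt hθω hθlam
  have hllim : Order.IsSuccLimit lam.ord := Cardinal.isSuccLimit_ord hlam.aleph0_le
  have hθlim : Order.IsSuccLimit θ.ord := Cardinal.isSuccLimit_ord hθω
  have htlo : θ.ord < lam.ord := Cardinal.ord_lt_ord.mpr hθlam
  have hθ0 : (0:Ordinal) < θ.ord := hθlim.pos
  have hSsub : ∀ δ ∈ S, δ < lam.ord := hSstat.1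
  have hmkθ : #(Set.Iio θ.ord) = Cardinal.lift.{1} θ := by
    rw [Ordinal.mk_Iio_ordinal, Cardinal.card_ord]
  have hcol : ∀ β, β < lam.ord → ∀ z, z < β → ∃ i, i < θ.ord ∧ z ∈ D i β := by
    intro β hβ z hz
    have h1 : z ∈ ⋃ i ∈ Set.Iio θ.ord, D i β := (hDun β hβ) ▸ hz
    simpa using h1
  have henum : ∀ (Z : Set Ordinal.{0}) (μc : Cardinal.{0}), #Z = Cardinal.lift.{1} μc →
      Nonempty (↥(Set.Iio μc.ord) ≃ ↥Z) := by
    intro Z μc h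
    apply Cardinal.eq.mp
    rw [Ordinal.mk_Iio_ordinal, Cardinal.card_ord, h]
  have hstatmono : ∀ T U : Set Ordinal.{0}, T ⊆ U → (∀ γ ∈ U, γ < lam.ord) →
      IsStationaryIn T lam.ord → IsStationaryIn U lam.ord := by
    intro T U hTU hU hT
    exact ⟨hU, fun C hC => (hT.2 C hC).imp (fun x hx => ⟨hTU hx.1, hx.2⟩)⟩
  -- the sets S_ξ^i
  set Sx : Ordinal.{0} → Ordinal.{0} → Set Ordinal.{0} :=
    fun ξ i => {δ | δ ∈ S ∧ ξ ∈ D i δ} with hSx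
  -- Step 3: for each ξ < λ there is i < θ with Sx ξ i stationary
  have hstatx : ∀ ξ, ξ < lam.ord → ∃ i, i < θ.ord ∧ IsStationaryIn (Sx ξ i) lam.ord := by
    intro ξ hξ
    by_contra hno
    push_neg at hno
    have hclubs : ∀ i : ↥(Set.Iio θ.ord), ∃ C, IsClubIn C lam.ord ∧ (Sx ξ i.1 ∩ C) = ∅ := by
      intro i
      have h1 : ∀ γ ∈ Sx ξ i.1, γ < lam.ord := fun γ hγ => hSsub γ hγ.1
      have h2 : ¬ IsStationaryIn (Sx ξ i.1) lam.ord := hno i.1 i.2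
      rw [IsStationaryIn, not_and] at h2
      have h3 := h2 h1
      push_neg at h3
      obtain ⟨C, hC, hCe⟩ := h3
      exact ⟨C, hC, hCe⟩
    choose Ci hCi hCie using hclubs
    haveI : Nonempty (↥(Set.Iio θ.ord)) := ⟨⟨0, hθ0⟩⟩
    have hIC : IsClubIn (⋂ i : ↥(Set.Iio θ.ord),
        (Ci i ∩ (Set.Ioi ξ ∩ Set.Iio lam.ord))) lam.ord := by
      apply isClubIn_iInter hlam hlw _
        (fun i => isClubIn_inter hlam hlw (hCi i) (isClubIn_tail hllim hξ))
      rw [hmkθ]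
      exact Cardinal.lift_lt.mpr hθlam
    obtain ⟨δ, hδS, hδC⟩ := hSstat.2 _ hIC
    have hδmem := mem_iInter.mp hδC
    have hδξ : ξ < δ := (hδmem ⟨0, hθ0⟩).2.1
    have hδlam : δ < lam.ord := (hδmem ⟨0, hθ0⟩).2.2
    obtain ⟨i, hi, hiD⟩ := hcol δ hδlam ξ hδξ
    have hfin : δ ∈ Sx ξ i ∩ Ci ⟨i, hi⟩ := ⟨⟨hδS, hiD⟩, (hδmem ⟨i, hi⟩).1⟩
    rw [hCie ⟨i, hi⟩] at hfin
    exact hfin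
  -- Step 4: selection
  set iSel : Ordinal.{0} → Ordinal.{0} :=
    fun ξ => if h : ξ < lam.ord then (hstatx ξ h).choose else 0 with hiSeldef
  have hiSel : ∀ ξ (h : ξ < lam.ord), iSel ξ < θ.ord ∧
      IsStationaryIn (Sx ξ (iSel ξ)) lam.ord := by
    intro ξ h
    simp only [hiSeldef, dif_pos h]
    exact ⟨(hstatx ξ h).choose_spec.1, (hstatx ξ h).choose_spec.2⟩
  -- Step 5: find i* with A unbounded
  have hstar : ∃ i, i < θ.ord ∧ ∀ α, α < lam.ord →
      ∃ β, (β < lam.ord ∧ iSel β ≤ i) ∧ α < β := by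
    by_contra hno
    push_neg at hno
    choose αf hαf1 hαf2 using fun i : ↥(Set.Iio θ.ord) => hno i.1 i.2
    obtain ⟨b, hb, hbb⟩ := bdd_of_mk_lt hlam (Z := Set.range αf)
      (fun z hz => by obtain ⟨i, rfl⟩ := hz; exact hαf1 i)
      (mk_range_le.trans_lt (by rw [hmkθ]; exact Cardinal.lift_lt.mpr hθlam))
    have h1 : iSel b < θ.ord := (hiSel b hb).1
    have h2 := hαf2 ⟨iSel b, h1⟩ b ⟨hb, le_refl _⟩
    exact absurd (lt_of_le_of_lt h2 (hbb _ (mem_range_self _))) (lt_irrefl b)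
  obtain ⟨istar, histar, hAunb⟩ := hstar
  set A : Set Ordinal.{0} := {ξ | ξ < lam.ord ∧ iSel ξ ≤ istar} with hA
  -- Step 6: covering for subsets of A of size exactly θ
  have covθeq : ∀ Z : Set Ordinal.{0}, Z ⊆ A → #Z = Cardinal.lift.{1} θ →
      ∃ i < θ.ord, ∃ β < lam.ord, Z ⊆ D i β := by
    intro Z hZA hZc
    obtain ⟨e⟩ := henum Z θ hZc
    set Ss : Ordinal.{0} → Set Ordinal.{0} := fun i =>
      if h : i < θ.ord then Sx ((e ⟨i, h⟩ : ↥Z) : Ordinal) istar else ∅ with hSsdef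
    have hSsprop : ∀ i, i < θ.ord → Ss i ⊆ S ∧ IsStationaryIn (Ss i) lam.ord := by
      intro i hi
      have hdef : Ss i = Sx ((e ⟨i, hi⟩ : ↥Z) : Ordinal) istar := dif_pos hi
      set ξ : Ordinal.{0} := ((e ⟨i, hi⟩ : ↥Z) : Ordinal) with hξ
      have hξA : ξ ∈ A := hZA (e ⟨i, hi⟩).2
      have hξlam : ξ < lam.ord := hξA.1
      have hsub1 : Sx ξ (iSel ξ) ⊆ Sx ξ istar := by
        intro δ hδ
        exact ⟨hδ.1, hDmono (iSel ξ) istar hξA.2 histar δ (hSsub δ hδ.1) hδ.2⟩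
      constructor
      · rw [hdef]; exact fun δ hδ => hδ.1
      · rw [hdef]
        exact hstatmono _ _ hsub1 (fun γ hγ => hSsub γ hγ.1) (hiSel ξ hξlam).2
    obtain ⟨j, hj, β, hβ, hmeet⟩ := hSprop Ss hSsprop
    have hm : max istar j < θ.ord := max_lt histar hj
    refine ⟨max istar j, hm, β, hβ, ?_⟩
    intro z hz
    set p : ↥(Set.Iio θ.ord) := e.symm ⟨z, hz⟩ with hp
    obtain ⟨δ, hδSs, hδD⟩ := hmeet p.1 p.2
    have hdef : Ss p.1 = Sx ((e ⟨p.1, p.2⟩ : ↥Z) : Ordinal) istar := dif_pos p.2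
    rw [hdef] at hδSs
    have hep : (e ⟨p.1, p.2⟩ : ↥Z) = ⟨z, hz⟩ := by
      have h1 : (⟨p.1, p.2⟩ : ↥(Set.Iio θ.ord)) = p := rfl
      rw [h1, hp]
      exact e.apply_symm_apply _
    rw [hep] at hδSs
    obtain ⟨hδS, hzD⟩ := hδSs
    have hδlam : δ < lam.ord := hSsub δ hδS
    have h1 : z ∈ D (max istar j) δ :=
      hDmono istar _ (le_max_left _ _) hm δ hδlam hzD
    have h2 : δ ∈ D (max istar j) β :=
      hDmono j _ (le_max_right _ _) hm β hβ hδD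
    exact htrans _ hm β hβ δ h2 h1
  -- Step 7: covering for small subsets
  have covlt : ∀ Z : Set Ordinal.{0}, (∀ z ∈ Z, z < lam.ord) → #Z < Cardinal.lift.{1} θ →
      ∃ i < θ.ord, ∃ β < lam.ord, Z ⊆ D i β := by
    intro Z hZl hZc
    obtain ⟨b, hb, hbb⟩ := bdd_of_mk_lt hlam hZl (hZc.trans (Cardinal.lift_lt.mpr hθlam))
    have hcho : ∀ z : ↥Z, ∃ i, i < θ.ord ∧ (z : Ordinal) ∈ D i b :=
      fun z => hcol b hb z (hbb z z.2)
    choose idx hidx1 hidx2 using hcho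
    obtain ⟨ib, hib, hibb⟩ := bdd_of_mk_lt hθ (Z := Set.range idx)
      (fun x hx => by obtain ⟨z, rfl⟩ := hx; exact hidx1 z)
      (mk_range_le.trans_lt hZc)
    exact ⟨ib, hib, b, hb, fun z hz =>
      hDmono (idx ⟨z, hz⟩) ib (hibb _ (mem_range_self _)).le hib b hb (hidx2 ⟨z, hz⟩)⟩
  -- Step 10: inaccessible case, arbitrary size μ > θ
  have covinacc : (∀ ζ < lam, ζ ^ θ < lam) → ∀ μc : Cardinal.{0}, θ < μc → μc < lam →
      ∀ Z : Set Ordinal.{0}, Z ⊆ A → #Z = Cardinal.lift.{1} μc →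
      ∃ i < θ.ord, ∃ β < lam.ord, Z ⊆ D i β := by
    intro hpow μc hθμ hμlam Z hZA hZc
    have hZl : ∀ z ∈ Z, z < lam.ord := fun z hz => (hZA hz).1
    obtain ⟨b0, hb0, hbb0⟩ := bdd_of_mk_lt hlam hZl
      (by rw [hZc]; exact Cardinal.lift_lt.mpr hμlam)
    set T := {W : Set Ordinal.{0} // W ⊆ Z ∧ #W = Cardinal.lift.{1} θ} with hT
    have hcov : ∀ W : T, ∃ i, i < θ.ord ∧ ∃ β, β < lam.ord ∧ W.1 ⊆ D i β := by
      intro W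
      obtain ⟨i, hi, β, hβ, hsub⟩ := covθeq W.1 (W.2.1.trans hZA) W.2.2
      exact ⟨i, hi, β, hβ, hsub⟩
    choose iW hiW βW hβW hWsub using hcov
    have hTcard : #T < Cardinal.lift.{1} lam := by
      have he : ∀ W : T, Nonempty (↥(Set.Iio θ.ord) ≃ ↥(W.1)) := fun W => henum W.1 θ W.2.2
      have eW := fun W => (he W).some
      have hFinj : Function.Injective
          (fun (W : T) (p : ↥(Set.Iio θ.ord)) => (⟨(eW W p : ↥W.1), W.2.1 (eW W p).2⟩ : ↥Z)) := by
        intro W1 W2 hF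
        have hims : ∀ (W3 W4 : T), (fun (W : T) (p : ↥(Set.Iio θ.ord)) =>
            (⟨(eW W p : ↥W.1), W.2.1 (eW W p).2⟩ : ↥Z)) W3 =
            (fun (W : T) (p : ↥(Set.Iio θ.ord)) =>
            (⟨(eW W p : ↥W.1), W.2.1 (eW W p).2⟩ : ↥Z)) W4 →
            W3.1 ⊆ W4.1 := by
          intro W3 W4 h34 x hx
          have hp := congrFun h34 ((eW W3).symm ⟨x, hx⟩)
          have h1 : ((eW W3 ((eW W3).symm ⟨x, hx⟩) : ↥W3.1) : Ordinal) = x := by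
            rw [Equiv.apply_symm_apply]
          have h2 := congrArg Subtype.val hp
          simp only at h2
          rw [h1] at h2
          rw [h2]
          exact ((eW W4) ((eW W3).symm ⟨x, hx⟩)).2
        apply Subtype.ext
        exact le_antisymm (hims W1 W2 hF) (hims W2 W1 hF.symm)
      calc #T ≤ #(↥(Set.Iio θ.ord) → ↥Z) := Cardinal.mk_le_of_injective hFinj
        _ = #(↥Z) ^ #(↥(Set.Iio θ.ord)) := (Cardinal.power_def _ _).symm
        _ = Cardinal.lift.{1} (μc ^ θ) := by
            rw [hZc, hmkθ, Cardinal.lift_power]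
        _ < Cardinal.lift.{1} lam := Cardinal.lift_lt.mpr (hpow μc hμlam)
    obtain ⟨b1, hb1, hbb1⟩ := bdd_of_mk_lt hlam (Z := Set.range βW)
      (fun x hx => by obtain ⟨W, rfl⟩ := hx; exact hβW W)
      (mk_range_le.trans_lt hTcard)
    set βs := max b0 b1 with hβsdef
    have hβs : βs < lam.ord := max_lt hb0 hb1
    have hzβs : ∀ z ∈ Z, z < βs := fun z hz => lt_of_lt_of_le (hbb0 z hz) (le_max_left _ _)
    set J : Ordinal.{0} → Ordinal.{0} := fun z => sInf {i | i < θ.ord ∧ z ∈ D i βs} with hJ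
    have hJspec : ∀ z ∈ Z, (J z < θ.ord ∧ z ∈ D (J z) βs) := by
      intro z hz
      have hne : {i | i < θ.ord ∧ z ∈ D i βs}.Nonempty := by
        obtain ⟨i, hi, hmem⟩ := hcol βs hβs z (hzβs z hz)
        exact ⟨i, hi, hmem⟩
      exact csInf_mem hne
    have hJmin : ∀ z, ∀ i, i < θ.ord → z ∈ D i βs → J z ≤ i :=
      fun z i hi hm => csInf_le' ⟨hi, hm⟩
    by_cases hb : ∃ ib, ib < θ.ord ∧ ∀ z ∈ Z, J z ≤ ib
    · obtain ⟨ib, hib, hball⟩ := hb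
      exact ⟨ib, hib, βs, hβs, fun z hz =>
        hDmono (J z) ib (hball z hz) hib βs hβs (hJspec z hz).2⟩
    · exfalso
      push_neg at hb
      have hbz : ∀ i : ↥(Set.Iio θ.ord), ∃ z, z ∈ Z ∧ i.1 < J z := by
        intro i
        obtain ⟨z, hz1, hz2⟩ := hb i.1 i.2
        exact ⟨z, hz1, hz2⟩
      choose zf hzf1 hzf2 using hbz
      set W0 : Set Ordinal.{0} := Set.range zf with hW0
      have hW0Z : W0 ⊆ Z := by rintro x ⟨i, rfl⟩; exact hzf1 i
      have hW0c : #W0 ≤ Cardinal.lift.{1} θ := mk_range_le.trans (le_of_eq hmkθ)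
      obtain ⟨W', hWW', hW'Z, hW'c⟩ := exists_superset_card_eq hW0Z hW0c
        (by rw [hZc]; exact Cardinal.lift_le.mpr hθμ.le)
        (by rw [← Cardinal.lift_aleph0.{1,0}]; exact Cardinal.lift_le.mpr hθω)
      set Wt : T := ⟨W', hW'Z, hW'c⟩ with hWt
      obtain ⟨j, hjθ, hjsub⟩ := hDdir (βW Wt) βs
        (lt_of_lt_of_le (hbb1 _ (mem_range_self Wt)) (le_max_right _ _)) hβs (iW Wt) (hiW Wt)
      have hjj : ∀ z ∈ W', J z ≤ j := fun z hz => hJmin z j hjθ (hjsub (hWsub Wt hz))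
      have hj1 : j + 1 < θ.ord := hθlim.succ_lt hjθ
      have h1 := hzf2 ⟨j+1, hj1⟩
      have h2 := hjj _ (hWW' (mem_range_self ⟨j+1, hj1⟩))
      exact absurd ((lt_add_one j).trans (h1.trans_le h2)) (lt_irrefl j)
  -- Step 11: regular case μ > θ, given covering for all smaller sizes
  have covreg : ∀ μc : Cardinal.{0}, μc.IsRegular → θ < μc → μc < lam →
      (∀ Y : Set Ordinal.{0}, Y ⊆ A → #Y < Cardinal.lift.{1} μc →
        ∃ i < θ.ord, ∃ β < lam.ord, Y ⊆ D i β) →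
      ∀ Z : Set Ordinal.{0}, Z ⊆ A → #Z = Cardinal.lift.{1} μc →
      ∃ i < θ.ord, ∃ β < lam.ord, Z ⊆ D i β := by
    intro μc hμreg hθμ hμlam IH Z hZA hZc
    obtain ⟨e⟩ := henum Z μc hZc
    have hmkμ : #(Set.Iio μc.ord) = Cardinal.lift.{1} μc := by
      rw [Ordinal.mk_Iio_ordinal, Cardinal.card_ord]
    set Zp : Ordinal.{0} → Set Ordinal.{0} :=
      fun ν => {x | ∃ p : ↥(Set.Iio μc.ord), p.1 < ν ∧ ((e p : ↥Z) : Ordinal) = x} with hZp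
    have hZpsub : ∀ ν, Zp ν ⊆ Z := by rintro ν x ⟨p, hp, rfl⟩; exact (e p).2
    have hZpcard : ∀ ν : ↥(Set.Iio μc.ord), #(Zp ν.1) < Cardinal.lift.{1} μc := by
      intro ν
      have hx : ∀ x : ↥(Zp ν.1), ∃ p : ↥(Set.Iio μc.ord), p.1 < ν.1 ∧
          ((e p : ↥Z) : Ordinal) = x.1 := fun x => x.2
      choose px hpx1 hpx2 using hx
      have hinj : Function.Injective
          (fun x : ↥(Zp ν.1) => (⟨(px x).1, hpx1 x⟩ : ↥(Set.Iio ν.1))) := by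
        intro x1 x2 h
        have h0 : (px x1).1 = (px x2).1 := congrArg (fun q : ↥(Set.Iio ν.1) => q.1) h
        have h1 : px x1 = px x2 := Subtype.ext h0
        apply Subtype.ext
        rw [← hpx2 x1, ← hpx2 x2, h1]
      calc #(Zp ν.1) ≤ #(↥(Set.Iio ν.1)) := Cardinal.mk_le_of_injective hinj
        _ = Cardinal.lift.{1} (ν.1).card := Ordinal.mk_Iio_ordinal ν.1
        _ < Cardinal.lift.{1} μc := Cardinal.lift_lt.mpr (Cardinal.lt_ord.mp ν.2)
    have hcovp : ∀ ν : ↥(Set.Iio μc.ord), ∃ i, i < θ.ord ∧ ∃ β, β < lam.ord ∧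
        Zp ν.1 ⊆ D i β := by
      intro ν
      obtain ⟨i, hi, β, hβ, hsub⟩ := IH (Zp ν.1) ((hZpsub ν.1).trans hZA) (hZpcard ν)
      exact ⟨i, hi, β, hβ, hsub⟩
    choose ip hip βp hβp hsubp using hcovp
    obtain ⟨βs, hβs, hbβ⟩ := bdd_of_mk_lt hlam (Z := Set.range βp)
      (fun x hx => by obtain ⟨ν, rfl⟩ := hx; exact hβp ν)
      (mk_range_le.trans_lt (by rw [hmkμ]; exact Cardinal.lift_lt.mpr hμlam))
    have hdir : ∀ ν : ↥(Set.Iio μc.ord), ∃ j, j < θ.ord ∧ D (ip ν) (βp ν) ⊆ D j βs :=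
      fun ν => hDdir (βp ν) βs (hbβ _ (mem_range_self ν)) hβs (ip ν) (hip ν)
    choose jp hjp hjsub using hdir
    have hpig : ∃ j, j < θ.ord ∧ ∀ b, b < μc.ord →
        ∃ ν : ↥(Set.Iio μc.ord), b < ν.1 ∧ jp ν = j := by
      by_contra hno
      push_neg at hno
      have hbf : ∀ i : ↥(Set.Iio θ.ord), ∃ b, b < μc.ord ∧
          ∀ ν : ↥(Set.Iio μc.ord), b < ν.1 → jp ν ≠ i.1 := by
        intro i
        obtain ⟨b, hb1, hb2⟩ := hno i.1 i.2
        exact ⟨b, hb1, fun ν hν => hb2 ν hν⟩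
      choose bf hbf1 hbf2 using hbf
      obtain ⟨bs, hbs, hbsb⟩ := bdd_of_mk_lt hμreg (Z := Set.range bf)
        (fun x hx => by obtain ⟨i, rfl⟩ := hx; exact hbf1 i)
        (mk_range_le.trans_lt (by rw [hmkθ]; exact Cardinal.lift_lt.mpr hθμ))
      set ν0 : ↥(Set.Iio μc.ord) := ⟨bs, hbs⟩ with hν0
      have hj0 : jp ν0 < θ.ord := hjp ν0
      exact hbf2 ⟨jp ν0, hj0⟩ ν0 (hbsb _ (mem_range_self (f := bf) ⟨jp ν0, hj0⟩)) rfl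
    obtain ⟨js, hjs, hpig⟩ := hpig
    refine ⟨js, hjs, βs, hβs, ?_⟩
    intro z hz
    set p : ↥(Set.Iio μc.ord) := e.symm ⟨z, hz⟩ with hp
    obtain ⟨ν, hνgt, hνj⟩ := hpig p.1 p.2
    have hzZp : z ∈ Zp ν.1 :=
      ⟨p, hνgt, congrArg Subtype.val (e.apply_symm_apply ⟨z, hz⟩)⟩
    exact hνj ▸ hjsub ν (hsubp ν hzZp)
  -- final assembly: strong induction on μ
  have main : ∀ μc : Cardinal.{0}, μc < lam → ∀ Z : Set Ordinal.{0}, Z ⊆ A →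
      #Z = Cardinal.lift.{1} μc → ∃ i < θ.ord, ∃ β < lam.ord, Z ⊆ D i β := by
    intro μc
    induction μc using WellFoundedLT.induction with
    | _ μc IH =>
      intro hμlam Z hZA hZc
      rcases lt_trichotomy μc θ with hlt | heq | hgt
      · exact covlt Z (fun z hz => (hZA hz).1) (hZc ▸ Cardinal.lift_lt.mpr hlt)
      · exact covθeq Z hZA (by rw [hZc, heq])
      · have IH' : ∀ Y : Set Ordinal.{0}, Y ⊆ A → #Y < Cardinal.lift.{1} μc →
            ∃ i < θ.ord, ∃ β < lam.ord, Y ⊆ D i β := by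
          intro Y hYA hYc
          obtain ⟨μ', hμ'⟩ := Cardinal.mem_range_lift_of_le hYc.le
          have hμ'lt : μ' < μc := by
            rw [← Cardinal.lift_lt.{0,1}, hμ']
            exact hYc
          rcases lt_trichotomy μ' θ with h1 | h2 | h3
          · exact covlt Y (fun z hz => (hYA hz).1)
              (by rw [← hμ']; exact Cardinal.lift_lt.mpr h1)
          · exact covθeq Y hYA (by rw [← hμ', h2])
          · exact IH μ' hμ'lt (hμ'lt.trans hμlam) Y hYA hμ'.symm
        rcases hcase with ⟨n, hn1, hlameq⟩ | hpow
        · exact covreg μc (regular_of_between hθ hlameq hgt hμlam) hgt hμlam IH' Z hZA hZc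
        · exact covinacc hpow μc hgt hμlam Z hZA hZc
  refine ⟨A, fun ξ hξ => hξ.1, ?_, fun μc hμ Z hZA hZc => main μc hμ Z hZA hZc⟩
  intro α hα
  obtain ⟨β, ⟨hβ1, hβ2⟩, hβ3⟩ := hAunb α hα
  exact ⟨β, ⟨hβ1, hβ2⟩, hβ3⟩
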